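/- Let α satisfy φ < α < 2, where φ = (1 + √5)/2 is the golden ratio, and let A, B, a, b be positive integers with A ≤ (α/(α − 1))·B. Then A·(d_α + c_α·log₂ a) + A + B ≤ (A + B)·(d_α − 1 + c_α·log₂(a + b)). -/
import Mathlib


open Real

/-- The constant `c_α = (α+1)/((α+1)·log₂(α+1) − α·log₂ α)`. -/
noncomputable def cA (α : ℝ) : ℝ :=
  (α + 1) / ((α + 1) * logb 2 (α + 1) - α * logb 2 α)

/-- `k₀(α)` is the least `ℓ ∈ ℕ` such that `(α² − α − 1)/(α − 1) ≥ α^(−ℓ)`. -/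
noncomputable def k0 (α : ℝ) : ℕ :=
  sInf {ℓ : ℕ | (α ^ 2 - α - 1) / (α - 1) ≥ α ^ (-(ℓ : ℝ))}

/-- The constant `d_α = 2^(k₀(α)+1)·max{k₀(α)+1, 3}·(2α − 1)/(α − 1) + 1`. -/
noncomputable def dA (α : ℝ) : ℝ :=
  2 ^ (k0 α + 1) * max ((k0 α : ℝ) + 1) 3 * (2 * α - 1) / (α - 1) + 1

set_option maxHeartbeats 1000000 in
/-- Lemma 7(b): for `φ < α < 2`, if `A ≤ (α/(α−1))·B` then
`A·(d_α + c_α·log a) + A + B ≤ (A+B)·(d_α − 1 + c_α·log(a+b))`. -/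
theorem alphamerge_C (α : ℝ) (hφ : (1 + Real.sqrt 5) / 2 < α) (hα2 : α < 2)
    (A B a b : ℕ) (hA : 0 < A) (hB : 0 < B) (ha : 0 < a) (hb : 0 < b)
    (h1 : (A : ℝ) ≤ α / (α - 1) * B) :
    (A : ℝ) * (dA α + cA α * logb 2 a) + A + B
      ≤ ((A : ℝ) + B) * (dA α - 1 + cA α * logb 2 ((a : ℝ) + b)) := by
  have hs5 : Real.sqrt 5 ^ 2 = 5 := Real.sq_sqrt (by norm_num)
  have hs5nn : 0 ≤ Real.sqrt 5 := Real.sqrt_nonneg 5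
  have hα1 : 1 < α := by nlinarith
  have hαm1 : 0 < α - 1 := by linarith
  -- c ≥ 0
  have hlogα : 0 ≤ logb 2 α := Real.logb_nonneg (by norm_num) hα1.le
  have hlogα1 : logb 2 α ≤ logb 2 (α + 1) :=
    Real.logb_le_logb_of_le (by norm_num) (by linarith) (by linarith)
  have hc : 0 ≤ cA α := by
    apply div_nonneg (by linarith)
    nlinarith
  -- log facts
  have hL1 : 0 ≤ logb 2 (a : ℝ) := Real.logb_nonneg (by norm_num) (by exact_mod_cast ha)
  have hL : logb 2 (a : ℝ) ≤ logb 2 ((a : ℝ) + b) := by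
    have h1a : (1:ℝ) ≤ (a:ℝ) := by exact_mod_cast ha
    have h1b : (0:ℝ) < (b:ℝ) := by exact_mod_cast hb
    exact Real.logb_le_logb_of_le (by norm_num) (by linarith) (by linarith)
  -- d is large
  have hr : 0 < (2 * α - 1) / (α - 1) := div_pos (by linarith) hαm1
  have h2k : (2:ℝ) ≤ 2 ^ (k0 α + 1) := by
    calc (2:ℝ) = 2 ^ 1 := (pow_one 2).symm
    _ ≤ 2 ^ (k0 α + 1) := by
        apply pow_le_pow_right₀ (by norm_num)
        omega
  have hM : (3:ℝ) ≤ max ((k0 α : ℝ) + 1) 3 := le_max_right _ _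
  have hd : 2 * ((2 * α - 1) / (α - 1)) ≤ dA α := by
    unfold dA
    have h6 : (6:ℝ) ≤ 2 ^ (k0 α + 1) * max ((k0 α : ℝ) + 1) 3 := by nlinarith
    have := mul_le_mul_of_nonneg_right h6 hr.le
    calc 2 * ((2 * α - 1) / (α - 1)) ≤ 6 * ((2 * α - 1) / (α - 1)) := by nlinarith
      _ ≤ 2 ^ (k0 α + 1) * max ((k0 α : ℝ) + 1) 3 * ((2 * α - 1) / (α - 1)) := this
      _ = 2 ^ (k0 α + 1) * max ((k0 α : ℝ) + 1) 3 * (2 * α - 1) / (α - 1) := by ring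
      _ ≤ _ := by linarith
  -- A + B ≤ r * B
  have hB' : (0:ℝ) < B := by exact_mod_cast hB
  have hA' : (0:ℝ) < A := by exact_mod_cast hA
  have hAB : (A:ℝ) + B ≤ (2 * α - 1) / (α - 1) * B := by
    rw [div_mul_eq_mul_div, le_div_iff₀ hαm1]
    rw [div_mul_eq_mul_div, le_div_iff₀ hαm1] at h1
    nlinarith
  have h2 : 2 * ((A:ℝ) + B) ≤ B * dA α := by
    calc 2 * ((A:ℝ) + B) ≤ 2 * ((2 * α - 1) / (α - 1) * B) := by linarith
      _ = (2 * ((2 * α - 1) / (α - 1))) * B := by ring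
      _ ≤ dA α * B := by nlinarith
      _ = B * dA α := by ring
  nlinarith [mul_nonneg (mul_nonneg hc (sub_nonneg.2 hL)) hA'.le,
    mul_nonneg (mul_nonneg hc (hL1.trans hL)) hB'.le]
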